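/- Let ℱ be a family of finite simple graphs and let K(ℱ) be the set of colored regularity graphs K such that no F ∈ ℱ admits a colored homomorphism into K; assume K(ℱ) is nonempty. Then for every p ∈ [0,1], inf{f_K(p) : K ∈ K(ℱ)} = inf{g_K(p) : K ∈ K(ℱ)}. -/

import Mathlib

/-- The three possible colors of an edge of a colored regularity graph. -/
inductive EColor : Type
  | white
  | gray
  | black
deriving DecidableEq

/-- A colored regularity graph (CRG): a finite nonempty vertex set (here `Fin n`),
each vertex colored white (`vcol i = false`) or black (`vcol i = true`), and each
unordered pair of distinct vertices colored white, gray or black. -/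
structure CRG : Type where
  n : ℕ
  npos : 0 < n
  vcol : Fin n → Bool
  ecol : Fin n → Fin n → EColor
  ecol_symm : ∀ i j, ecol i j = ecol j i

namespace CRG

/-- The function `f_K(p) = (1/k²)[p(|VW| + 2|EW|) + (1-p)(|VB| + 2|EB|)]`; the
counts over ordered pairs of distinct vertices give `2|EW|` and `2|EB|`. -/
noncomputable def fK (K : CRG) (p : ℝ) : ℝ :=
  (1 / (K.n : ℝ) ^ 2) *
    (p * (((Finset.univ.filter (fun i : Fin K.n => K.vcol i = false)).card : ℝ)
        + ((Finset.univ.filter (fun ij : Fin K.n × Fin K.n =>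
            ij.1 ≠ ij.2 ∧ K.ecol ij.1 ij.2 = EColor.white)).card : ℝ))
   + (1 - p) * (((Finset.univ.filter (fun i : Fin K.n => K.vcol i = true)).card : ℝ)
        + ((Finset.univ.filter (fun ij : Fin K.n × Fin K.n =>
            ij.1 ≠ ij.2 ∧ K.ecol ij.1 ij.2 = EColor.black)).card : ℝ)))

/-- The matrix `M_K(p)`. -/
noncomputable def M (K : CRG) (p : ℝ) : Matrix (Fin K.n) (Fin K.n) ℝ :=
  Matrix.of fun i j =>
    if i = j then (if K.vcol i then 1 - p else p)
    else
      match K.ecol i j with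
      | EColor.white => p
      | EColor.gray => 0
      | EColor.black => 1 - p

/-- The function `g_K(p)`: the minimum (here: infimum, which is attained) of the
quadratic form `uᵀ M_K(p) u` over the standard simplex. -/
noncomputable def gK (K : CRG) (p : ℝ) : ℝ :=
  sInf { x : ℝ | ∃ u : Fin K.n → ℝ, (∀ i, 0 ≤ u i) ∧ (∑ i, u i) = 1 ∧
    x = ∑ i, ∑ j, u i * K.M p i j * u j }

end CRG

/-- A colored homomorphism from a simple graph `F` to a CRG `K`. -/
def CHom {V : Type} (F : SimpleGraph V) (K : CRG) : Prop :=
  ∃ φ : V → Fin K.n,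
    (∀ u v : V, F.Adj u v →
      (φ u = φ v ∧ K.vcol (φ u) = true) ∨
      (φ u ≠ φ v ∧ K.ecol (φ u) (φ v) ≠ EColor.white)) ∧
    (∀ u v : V, u ≠ v → ¬ F.Adj u v →
      (φ u = φ v ∧ K.vcol (φ u) = false) ∨
      (φ u ≠ φ v ∧ K.ecol (φ u) (φ v) ≠ EColor.black))

/-- A family of finite simple graphs, each presented on a vertex set `Fin n`. -/
abbrev GraphFam : Type := Set ((n : ℕ) × SimpleGraph (Fin n))

/-- The edit distance between two simple graphs on the same finite vertex set. -/
noncomputable def editDist {V : Type} [Fintype V] (G G' : SimpleGraph V) : ℕ :=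
  (symmDiff G.edgeSet G'.edgeSet).ncard

/-- A graph `G` is `ℱ`-free if no member of `ℱ` embeds into `G`. -/
def FamFree (ℱ : GraphFam) {V : Type} (G : SimpleGraph V) : Prop :=
  ∀ F ∈ ℱ, ¬ Nonempty (F.2 ↪g G)

/-- `Dist(G, Forb(ℱ))`: minimum edit distance from `G` to an `ℱ`-free graph on
the same vertex set. -/
noncomputable def distFam (ℱ : GraphFam) {V : Type} [Fintype V] (G : SimpleGraph V) : ℕ :=
  sInf { d | ∃ G' : SimpleGraph V, FamFree ℱ G' ∧ d = editDist G G' }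

/-- `Dist(n, Forb(ℱ))`: maximum of `Dist(G, Forb(ℱ))` over `n`-vertex graphs. -/
noncomputable def distFamN (ℱ : GraphFam) (n : ℕ) : ℕ :=
  sSup { d | ∃ G : SimpleGraph (Fin n), d = distFam ℱ G }

/-- `𝒦(ℱ)`: the set of CRGs into which no member of `ℱ` has a colored homomorphism. -/
def KFam (ℱ : GraphFam) : Set CRG := { K : CRG | ∀ F ∈ ℱ, ¬ CHom F.2 K }

-- entrywise decomposition
lemma M_decomp (K : CRG) (p : ℝ) (i j : Fin K.n) :
    K.M p i j = (if i = j then (if K.vcol i then 1 - p else p) else 0)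
      + (if i ≠ j ∧ K.ecol i j = EColor.white then p else 0)
      + (if i ≠ j ∧ K.ecol i j = EColor.black then 1 - p else 0) := by
  unfold CRG.M
  by_cases h : i = j
  · simp [h]
  · rcases he : K.ecol i j <;> simp [h, he]

lemma fK_eq_sum (K : CRG) (p : ℝ) :
    K.fK p = (1 / (K.n : ℝ) ^ 2) * ∑ i, ∑ j, K.M p i j := by
  have h : ∑ i, ∑ j, K.M p i j =
      (∑ i, ∑ j, (if i = j then (if K.vcol i then 1 - p else p) else 0))
      + (∑ i, ∑ j, (if i ≠ j ∧ K.ecol i j = EColor.white then p else 0))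
      + (∑ i, ∑ j, (if i ≠ j ∧ K.ecol i j = EColor.black then (1 - p) else 0)) := by
    rw [← Finset.sum_add_distrib, ← Finset.sum_add_distrib]
    refine Finset.sum_congr rfl fun i _ => ?_
    rw [← Finset.sum_add_distrib, ← Finset.sum_add_distrib]
    exact Finset.sum_congr rfl fun j _ => M_decomp K p i j
  have h1 : (∑ i, ∑ j, (if i = j then (if K.vcol i then 1 - p else p) else 0))
      = p * ((Finset.univ.filter (fun i : Fin K.n => K.vcol i = false)).card : ℝ)
      + (1 - p) * ((Finset.univ.filter (fun i : Fin K.n => K.vcol i = true)).card : ℝ) := by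
    have : ∀ i : Fin K.n, (∑ j, (if i = j then (if K.vcol i then 1 - p else p) else 0))
        = (if K.vcol i then 1 - p else p) := by
      intro i; simp
    rw [Finset.sum_congr rfl fun i _ => this i]
    rw [Finset.sum_ite, Finset.sum_const, Finset.sum_const]
    have hf : Finset.univ.filter (fun i : Fin K.n => ¬ K.vcol i = true)
        = Finset.univ.filter (fun i : Fin K.n => K.vcol i = false) := by
      apply Finset.filter_congr; intro i _; simp
    rw [hf, nsmul_eq_mul, nsmul_eq_mul]
    ring
  have key : ∀ (c : ℝ) (P : Fin K.n → Fin K.n → Prop) [∀ i j, Decidable (P i j)],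
      (∑ i, ∑ j, (if P i j then c else 0))
        = c * ((Finset.univ.filter (fun ij : Fin K.n × Fin K.n => P ij.1 ij.2)).card : ℝ) := by
    intro c P _
    rw [show (∑ i, ∑ j, (if P i j then c else 0))
        = ∑ x : Fin K.n × Fin K.n, (if P x.1 x.2 then c else 0) from
      (Fintype.sum_prod_type (f := fun x : Fin K.n × Fin K.n => if P x.1 x.2 then c else 0)).symm]
    rw [Finset.card_filter]
    push_cast
    rw [Finset.mul_sum]
    refine Finset.sum_congr rfl fun x _ => ?_
    by_cases h : P x.1 x.2 <;> simp [h]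
  rw [CRG.fK, h, h1, key p (fun i j => i ≠ j ∧ K.ecol i j = EColor.white),
    key (1-p) (fun i j => i ≠ j ∧ K.ecol i j = EColor.black)]
  ring

noncomputable def qf (K : CRG) (p : ℝ) (u : Fin K.n → ℝ) : ℝ :=
  ∑ i, ∑ j, u i * K.M p i j * u j

lemma M_bounds (K : CRG) {p : ℝ} (hp : p ∈ Set.Icc (0:ℝ) 1) (i j : Fin K.n) :
    0 ≤ K.M p i j ∧ K.M p i j ≤ 1 := by
  obtain ⟨h0, h1⟩ := hp
  show ((0:ℝ) ≤ (if i = j then (if K.vcol i then 1 - p else p)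
      else match K.ecol i j with
        | EColor.white => p | EColor.gray => 0 | EColor.black => 1 - p)) ∧
    ((if i = j then (if K.vcol i then 1 - p else p)
      else match K.ecol i j with
        | EColor.white => p | EColor.gray => 0 | EColor.black => 1 - p) ≤ 1)
  by_cases h : i = j
  · subst h
    by_cases hv : K.vcol i <;> simp [hv] <;> constructor <;> linarith
  · cases hec : K.ecol i j <;> simp [h, hec] <;> constructor <;> linarith

lemma M_nonneg (K : CRG) {p : ℝ} (hp : p ∈ Set.Icc (0:ℝ) 1) (i j : Fin K.n) :
    0 ≤ K.M p i j := (M_bounds K hp i j).1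

lemma M_abs_le_one (K : CRG) {p : ℝ} (hp : p ∈ Set.Icc (0:ℝ) 1) (i j : Fin K.n) :
    |K.M p i j| ≤ 1 := by
  rw [abs_le]
  have := M_bounds K hp i j
  constructor <;> linarith [this.1, this.2]

lemma qf_nonneg (K : CRG) {p : ℝ} (hp : p ∈ Set.Icc (0:ℝ) 1)
    {u : Fin K.n → ℝ} (hu : ∀ i, 0 ≤ u i) : 0 ≤ qf K p u := by
  apply Finset.sum_nonneg; intro i _
  apply Finset.sum_nonneg; intro j _
  have := M_nonneg K hp i j
  have := hu i; have := hu j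
  positivity

lemma gK_bdd (K : CRG) {p : ℝ} (hp : p ∈ Set.Icc (0:ℝ) 1) :
    BddBelow { x : ℝ | ∃ u : Fin K.n → ℝ, (∀ i, 0 ≤ u i) ∧ (∑ i, u i) = 1 ∧
      x = ∑ i, ∑ j, u i * K.M p i j * u j } := by
  refine ⟨0, fun x hx => ?_⟩
  obtain ⟨u, hu, -, rfl⟩ := hx
  exact qf_nonneg K hp hu

lemma gK_le_qf (K : CRG) {p : ℝ} (hp : p ∈ Set.Icc (0:ℝ) 1)
    {u : Fin K.n → ℝ} (hu : ∀ i, 0 ≤ u i) (hs : (∑ i, u i) = 1) :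
    K.gK p ≤ qf K p u :=
  csInf_le (gK_bdd K hp) ⟨u, hu, hs, rfl⟩

lemma gK_le_fK (K : CRG) {p : ℝ} (hp : p ∈ Set.Icc (0:ℝ) 1) : K.gK p ≤ K.fK p := by
  have hn : (0:ℝ) < (K.n : ℝ) := by exact_mod_cast K.npos
  have hs : (∑ _i : Fin K.n, (1 / (K.n : ℝ))) = 1 := by
    rw [Finset.sum_const, Finset.card_univ, Fintype.card_fin, nsmul_eq_mul]
    field_simp
  have h := gK_le_qf K hp (u := fun _ => 1 / (K.n : ℝ)) (fun _ => by positivity) hs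
  have hq : qf K p (fun _ => 1 / (K.n : ℝ)) = K.fK p := by
    rw [fK_eq_sum, qf, Finset.mul_sum]
    refine Finset.sum_congr rfl fun i _ => ?_
    rw [Finset.mul_sum]
    refine Finset.sum_congr rfl fun j _ => ?_
    ring
  rwa [hq] at h

noncomputable def proj (n : ℕ) (m : Fin n → ℕ) : Fin (∑ i, m i) → Fin n :=
  fun a => ((Fintype.equivFinOfCardEq (α := Σ i : Fin n, Fin (m i)) (by simp)).symm a).1

lemma sum_proj {n : ℕ} (m : Fin n → ℕ) (g : Fin n → ℝ) :
    ∑ a : Fin (∑ i, m i), g (proj n m a) = ∑ i, (m i : ℝ) * g i := by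
  rw [← Equiv.sum_comp (Fintype.equivFinOfCardEq (α := Σ i : Fin n, Fin (m i)) (by simp))
    (fun a => g (proj n m a))]
  have : ∀ x : Σ i : Fin n, Fin (m i),
      g (proj n m ((Fintype.equivFinOfCardEq (α := Σ i : Fin n, Fin (m i)) (by simp)) x))
        = g x.1 := by
    intro x; simp [proj]
  rw [Finset.sum_congr rfl fun x _ => this x]
  rw [← Finset.univ_sigma_univ, Finset.sum_sigma]
  simp [mul_comm]

noncomputable def blowup (K : CRG) (m : Fin K.n → ℕ) (hN : 0 < ∑ i, m i) : CRG where
  n := ∑ i, m i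
  npos := hN
  vcol a := K.vcol (proj K.n m a)
  ecol a b :=
    if proj K.n m a = proj K.n m b then
      (if K.vcol (proj K.n m a) then EColor.black else EColor.white)
    else K.ecol (proj K.n m a) (proj K.n m b)
  ecol_symm := by
    intro a b
    by_cases h : proj K.n m a = proj K.n m b
    · rw [if_pos h, if_pos h.symm, h]
    · rw [if_neg h, if_neg (fun h' => h h'.symm), K.ecol_symm]

lemma M_blowup (K : CRG) (m : Fin K.n → ℕ) (hN : 0 < ∑ i, m i) (p : ℝ)
    (a b : Fin (blowup K m hN).n) :
    (blowup K m hN).M p a b = K.M p (proj K.n m a) (proj K.n m b) := by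
  show (if a = b then (if (blowup K m hN).vcol a then 1 - p else p)
      else match (blowup K m hN).ecol a b with
        | EColor.white => p | EColor.gray => 0 | EColor.black => 1 - p)
    = (if proj K.n m a = proj K.n m b
        then (if K.vcol (proj K.n m a) then 1 - p else p)
      else match K.ecol (proj K.n m a) (proj K.n m b) with
        | EColor.white => p | EColor.gray => 0 | EColor.black => 1 - p)
  by_cases hab : a = b
  · subst hab
    simp only [if_pos rfl]
    rfl
  · rw [if_neg hab]
    by_cases h : proj K.n m a = proj K.n m b
    · rw [if_pos h]
      show (match (if proj K.n m a = proj K.n m b then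
          (if K.vcol (proj K.n m a) then EColor.black else EColor.white)
        else K.ecol (proj K.n m a) (proj K.n m b)) with
        | EColor.white => p | EColor.gray => 0 | EColor.black => 1 - p) = _
      rw [if_pos h]
      by_cases hv : K.vcol (proj K.n m a) <;> simp [hv]
    · rw [if_neg h]
      show (match (if proj K.n m a = proj K.n m b then
          (if K.vcol (proj K.n m a) then EColor.black else EColor.white)
        else K.ecol (proj K.n m a) (proj K.n m b)) with
        | EColor.white => p | EColor.gray => 0 | EColor.black => 1 - p) = _
      rw [if_neg h]

lemma fK_blowup (K : CRG) (m : Fin K.n → ℕ) (hN : 0 < ∑ i, m i) (p : ℝ) :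
    (blowup K m hN).fK p
      = qf K p (fun i => (m i : ℝ) / ((∑ i, m i : ℕ) : ℝ)) := by
  have hN' : (0:ℝ) < ((∑ i, m i : ℕ) : ℝ) := by exact_mod_cast hN
  rw [fK_eq_sum]
  have h1 : ∑ a : Fin (blowup K m hN).n, ∑ b : Fin (blowup K m hN).n,
      (blowup K m hN).M p a b
      = ∑ i, (m i : ℝ) * ∑ j, (m j : ℝ) * K.M p i j := by
    have e1 : ∀ a : Fin (∑ i, m i), ∑ b : Fin (∑ i, m i),
        (blowup K m hN).M p a b = ∑ j, (m j : ℝ) * K.M p (proj K.n m a) j := by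
      intro a
      refine (Finset.sum_congr rfl fun b _ => M_blowup K m hN p a b).trans ?_
      exact sum_proj m (fun j => K.M p (proj K.n m a) j)
    calc (∑ a : Fin (∑ i, m i), ∑ b : Fin (∑ i, m i), (blowup K m hN).M p a b)
        = ∑ a : Fin (∑ i, m i), ∑ j, (m j : ℝ) * K.M p (proj K.n m a) j :=
          Finset.sum_congr rfl fun a _ => e1 a
      _ = _ := sum_proj m (fun i => ∑ j, (m j : ℝ) * K.M p i j)
  rw [h1, qf, Finset.mul_sum]
  refine Finset.sum_congr rfl fun i _ => ?_
  rw [Finset.mul_sum, Finset.mul_sum]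
  refine Finset.sum_congr rfl fun j _ => ?_
  have : ((blowup K m hN).n : ℝ) = ((∑ i, m i : ℕ) : ℝ) := rfl
  rw [this]
  field_simp

lemma CHom_blowup {V : Type} (F : SimpleGraph V) (K : CRG) (m : Fin K.n → ℕ)
    (hN : 0 < ∑ i, m i) (h : CHom F (blowup K m hN)) : CHom F K := by
  obtain ⟨φ, h1, h2⟩ := h
  refine ⟨fun v => proj K.n m (φ v), ?_, ?_⟩
  · intro u v huv
    rcases h1 u v huv with ⟨he, hc⟩ | ⟨hne, hec⟩
    · exact Or.inl ⟨by show proj K.n m (φ u) = proj K.n m (φ v); rw [he], hc⟩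
    · by_cases h : proj K.n m (φ u) = proj K.n m (φ v)
      · left
        refine ⟨h, ?_⟩
        have he2 : (blowup K m hN).ecol (φ u) (φ v)
            = (if K.vcol (proj K.n m (φ u)) then EColor.black else EColor.white) := by
          show (if _ then _ else _) = _
          rw [if_pos h]
        rw [he2] at hec
        by_cases hv : K.vcol (proj K.n m (φ u)) = true
        · exact hv
        · rw [if_neg hv] at hec; exact absurd rfl hec
      · right
        refine ⟨h, ?_⟩
        have he2 : (blowup K m hN).ecol (φ u) (φ v)
            = K.ecol (proj K.n m (φ u)) (proj K.n m (φ v)) := by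
          show (if _ then _ else _) = _
          rw [if_neg h]
        rwa [he2] at hec
  · intro u v huv hnadj
    rcases h2 u v huv hnadj with ⟨he, hc⟩ | ⟨hne, hec⟩
    · exact Or.inl ⟨by show proj K.n m (φ u) = proj K.n m (φ v); rw [he], hc⟩
    · by_cases h : proj K.n m (φ u) = proj K.n m (φ v)
      · left
        refine ⟨h, ?_⟩
        have he2 : (blowup K m hN).ecol (φ u) (φ v)
            = (if K.vcol (proj K.n m (φ u)) then EColor.black else EColor.white) := by
          show (if _ then _ else _) = _
          rw [if_pos h]
        rw [he2] at hec
        by_cases hv : K.vcol (proj K.n m (φ u)) = true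
        · rw [if_pos hv] at hec; exact absurd rfl hec
        · simpa using hv
      · right
        refine ⟨h, ?_⟩
        have he2 : (blowup K m hN).ecol (φ u) (φ v)
            = K.ecol (proj K.n m (φ u)) (proj K.n m (φ v)) := by
          show (if _ then _ else _) = _
          rw [if_neg h]
        rwa [he2] at hec

lemma qf_diff (K : CRG) {p : ℝ} (hp : p ∈ Set.Icc (0:ℝ) 1) {u v : Fin K.n → ℝ}
    (hu : ∀ i, 0 ≤ u i) (hv : ∀ i, 0 ≤ v i)
    (hsu : ∑ i, u i = 1) (hsv : ∑ i, v i = 1) :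
    qf K p v - qf K p u ≤ 2 * ∑ i, |v i - u i| := by
  have hd : qf K p v - qf K p u
      = ∑ i, ∑ j, K.M p i j * (v i * (v j - u j) + (v i - u i) * u j) := by
    rw [qf, qf, ← Finset.sum_sub_distrib]
    refine Finset.sum_congr rfl fun i _ => ?_
    rw [← Finset.sum_sub_distrib]
    exact Finset.sum_congr rfl fun j _ => by ring
  rw [hd]
  calc ∑ i, ∑ j, K.M p i j * (v i * (v j - u j) + (v i - u i) * u j)
      ≤ ∑ i, ∑ j, (v i * |v j - u j| + |v i - u i| * u j) := by
        refine Finset.sum_le_sum fun i _ => Finset.sum_le_sum fun j _ => ?_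
        calc K.M p i j * (v i * (v j - u j) + (v i - u i) * u j)
            ≤ |K.M p i j * (v i * (v j - u j) + (v i - u i) * u j)| := le_abs_self _
          _ = |K.M p i j| * |v i * (v j - u j) + (v i - u i) * u j| := abs_mul _ _
          _ ≤ 1 * |v i * (v j - u j) + (v i - u i) * u j| := by
              exact mul_le_mul_of_nonneg_right (M_abs_le_one K hp i j) (abs_nonneg _)
          _ = |v i * (v j - u j) + (v i - u i) * u j| := one_mul _
          _ ≤ |v i * (v j - u j)| + |(v i - u i) * u j| := abs_add_le _ _
          _ = v i * |v j - u j| + |v i - u i| * u j := by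
              rw [abs_mul, abs_mul, abs_of_nonneg (hv i), abs_of_nonneg (hu j)]
    _ = 2 * ∑ i, |v i - u i| := by
        have hinner : ∀ i, ∑ j, (v i * |v j - u j| + |v i - u i| * u j)
            = v i * (∑ j, |v j - u j|) + |v i - u i| := by
          intro i
          rw [Finset.sum_add_distrib, ← Finset.mul_sum, ← Finset.mul_sum, hsu, mul_one]
        rw [Finset.sum_congr rfl fun i _ => hinner i, Finset.sum_add_distrib,
          ← Finset.sum_mul, hsv, one_mul]
        ring

lemma qf_approx (K : CRG) {p : ℝ} (hp : p ∈ Set.Icc (0:ℝ) 1) {u : Fin K.n → ℝ}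
    (hu : ∀ i, 0 ≤ u i) (hs : ∑ i, u i = 1) {ε : ℝ} (hε : 0 < ε) :
    ∃ (m : Fin K.n → ℕ) (hN : 0 < ∑ i, m i),
      qf K p (fun i => (m i : ℝ) / ((∑ i, m i : ℕ) : ℝ)) ≤ qf K p u + ε := by
  obtain ⟨N, hNgt⟩ := exists_nat_gt (2 * (K.n : ℝ) ^ 2 / ε)
  have hNpos : 0 < N := by
    by_contra h
    push_neg at h
    interval_cases N
    · have : (0:ℝ) < 2 * (K.n : ℝ) ^ 2 / ε := by
        have : (0:ℝ) < (K.n : ℝ) := by exact_mod_cast K.npos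
        positivity
      simp at hNgt; linarith
  have hNR : (0:ℝ) < (N:ℝ) := by exact_mod_cast hNpos
  set i₀ : Fin K.n := ⟨0, K.npos⟩ with hi₀
  set S : ℕ := ∑ j ∈ Finset.univ.erase i₀, ⌊(N:ℝ) * u j⌋₊ with hS
  have hSle : S ≤ N := by
    have h1 : (S:ℝ) ≤ ∑ j ∈ Finset.univ.erase i₀, (N:ℝ) * u j := by
      rw [hS]
      push_cast
      exact Finset.sum_le_sum fun j _ => Nat.floor_le (by have := hu j; positivity)
    have h2 : ∑ j ∈ Finset.univ.erase i₀, (N:ℝ) * u j ≤ (N:ℝ) := by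
      rw [← Finset.mul_sum]
      have : ∑ j ∈ Finset.univ.erase i₀, u j ≤ 1 := by
        have h3 := Finset.sum_erase_add Finset.univ u (Finset.mem_univ i₀)
        have hui₀ := hu i₀
        rw [hs] at h3
        linarith
      nlinarith
    exact_mod_cast le_trans h1 h2
  set m : Fin K.n → ℕ := fun i => if i = i₀ then N - S else ⌊(N:ℝ) * u i⌋₊ with hm
  have hsumm : ∑ i, m i = N := by
    rw [← Finset.sum_erase_add Finset.univ m (Finset.mem_univ i₀)]
    have h1 : ∑ j ∈ Finset.univ.erase i₀, m j = S := by
      rw [hS]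
      refine Finset.sum_congr rfl fun j hj => ?_
      rw [hm]
      simp only
      rw [if_neg (Finset.ne_of_mem_erase hj)]
    have h2 : m i₀ = N - S := if_pos rfl
    rw [h1, h2]
    omega
  refine ⟨m, by omega, ?_⟩
  set v : Fin K.n → ℝ := fun i => (m i : ℝ) / ((∑ i, m i : ℕ) : ℝ) with hv
  have hvN : ∀ i, v i = (m i : ℝ) / (N:ℝ) := by intro i; rw [hv, hsumm]
  have hvnn : ∀ i, 0 ≤ v i := by
    intro i; rw [hvN]; positivity
  have hsv : ∑ i, v i = 1 := by
    rw [Finset.sum_congr rfl fun i _ => hvN i, ← Finset.sum_div]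
    rw [← Nat.cast_sum]
    rw [hsumm]
    field_simp
  have hne : ∀ i, i ≠ i₀ → |v i - u i| ≤ 1 / (N:ℝ) := by
    intro i hi
    have hx1 : (⌊(N:ℝ) * u i⌋₊ : ℝ) ≤ (N:ℝ) * u i :=
      Nat.floor_le (by have := hu i; positivity)
    have hx2 : (N:ℝ) * u i < (⌊(N:ℝ) * u i⌋₊ : ℝ) + 1 := Nat.lt_floor_add_one _
    rw [hvN]
    have hmne : m i = ⌊(N:ℝ) * u i⌋₊ := if_neg hi
    rw [hmne]
    have e : ((⌊(N:ℝ) * u i⌋₊ : ℝ)) / (N:ℝ) - u i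
        = (((⌊(N:ℝ) * u i⌋₊ : ℝ)) - (N:ℝ) * u i) / (N:ℝ) := by field_simp
    rw [e, abs_div, abs_of_pos hNR]
    gcongr
    rw [abs_le]
    constructor <;> linarith
  have hverase : ∑ j ∈ Finset.univ.erase i₀, v j = (S:ℝ) / (N:ℝ) := by
    rw [Finset.sum_congr rfl fun j hj => by
      rw [hvN, show m j = ⌊(N:ℝ) * u j⌋₊ from if_neg (Finset.ne_of_mem_erase hj)]]
    rw [← Finset.sum_div, hS]
    push_cast
    rfl
  have hvi₀ : v i₀ = 1 - (S:ℝ)/(N:ℝ) := by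
    rw [hvN, show m i₀ = N - S from if_pos rfl, Nat.cast_sub hSle]
    field_simp
  have hui₀ : u i₀ = 1 - ∑ j ∈ Finset.univ.erase i₀, u j := by
    have h3 := Finset.sum_erase_add Finset.univ u (Finset.mem_univ i₀)
    rw [hs] at h3
    linarith
  have hbound : ∀ i, |v i - u i| ≤ (K.n : ℝ) / (N:ℝ) := by
    have hn1 : (1:ℝ) ≤ (K.n : ℝ) := by exact_mod_cast K.npos
    intro i
    by_cases hi : i = i₀
    · rw [hi]
      have hvi : v i₀ - u i₀ = ∑ j ∈ Finset.univ.erase i₀, (u j - v j) := by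
        rw [Finset.sum_sub_distrib, hvi₀, hui₀, hverase]
        ring
      rw [hvi]
      calc |∑ j ∈ Finset.univ.erase i₀, (u j - v j)|
          ≤ ∑ j ∈ Finset.univ.erase i₀, |u j - v j| := Finset.abs_sum_le_sum_abs _ _
        _ ≤ ∑ _j ∈ Finset.univ.erase i₀, (1/(N:ℝ)) := by
            refine Finset.sum_le_sum fun j hj => ?_
            rw [abs_sub_comm]
            exact hne j (Finset.ne_of_mem_erase hj)
        _ = ((Finset.univ.erase i₀).card : ℝ) * (1/(N:ℝ)) := by
            rw [Finset.sum_const, nsmul_eq_mul]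
        _ ≤ (K.n : ℝ) * (1/(N:ℝ)) := by
            gcongr
            exact le_trans (Finset.card_le_card (Finset.erase_subset _ _)) (by simp)
        _ = (K.n : ℝ) / (N:ℝ) := by ring
    · calc |v i - u i| ≤ 1/(N:ℝ) := hne i hi
        _ ≤ (K.n : ℝ)/(N:ℝ) := by gcongr
  have hδ : ∑ i, |v i - u i| ≤ (K.n : ℝ)^2 / (N:ℝ) := by
    calc ∑ i, |v i - u i| ≤ ∑ _i : Fin K.n, (K.n : ℝ)/(N:ℝ) :=
          Finset.sum_le_sum fun i _ => hbound i
      _ = (K.n : ℝ) * ((K.n : ℝ)/(N:ℝ)) := by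
          rw [Finset.sum_const, nsmul_eq_mul, Finset.card_univ, Fintype.card_fin]
      _ = (K.n : ℝ)^2 / (N:ℝ) := by ring
  have hdiff := qf_diff K hp hu hvnn hs hsv
  have hfin : 2 * ((K.n : ℝ)^2 / (N:ℝ)) ≤ ε := by
    rw [div_lt_iff₀ hε] at hNgt
    rw [show 2 * ((K.n : ℝ)^2 / (N:ℝ)) = (2 * (K.n : ℝ)^2) / (N:ℝ) by ring,
      div_le_iff₀ hNR]
    nlinarith
  calc qf K p v ≤ qf K p u + 2 * ∑ i, |v i - u i| := by linarith
    _ ≤ qf K p u + 2 * ((K.n : ℝ)^2 / (N:ℝ)) := by linarith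
    _ ≤ qf K p u + ε := by linarith

lemma gK_nonneg (K : CRG) {p : ℝ} (hp : p ∈ Set.Icc (0:ℝ) 1) : 0 ≤ K.gK p :=
  Real.sInf_nonneg (fun x hx => by
    obtain ⟨u, hu, -, rfl⟩ := hx
    exact qf_nonneg K hp hu)

lemma qset_nonempty (K : CRG) (p : ℝ) :
    { x : ℝ | ∃ u : Fin K.n → ℝ, (∀ i, 0 ≤ u i) ∧ (∑ i, u i) = 1 ∧
      x = ∑ i, ∑ j, u i * K.M p i j * u j }.Nonempty := by
  have hn : (0:ℝ) < (K.n : ℝ) := by exact_mod_cast K.npos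
  refine ⟨_, fun _ => 1 / (K.n : ℝ), fun _ => by positivity, ?_, rfl⟩
  rw [Finset.sum_const, Finset.card_univ, Fintype.card_fin, nsmul_eq_mul]
  field_simp

theorem f_eq_g (ℱ : GraphFam) (hne : (KFam ℱ).Nonempty)
    (p : ℝ) (hp : p ∈ Set.Icc (0 : ℝ) 1) :
    sInf { x : ℝ | ∃ K ∈ KFam ℱ, x = K.fK p } =
      sInf { x : ℝ | ∃ K ∈ KFam ℱ, x = K.gK p } := by
  obtain ⟨K₀, hK₀⟩ := hne
  have hfne : { x : ℝ | ∃ K ∈ KFam ℱ, x = K.fK p }.Nonempty := ⟨_, K₀, hK₀, rfl⟩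
  have hgne : { x : ℝ | ∃ K ∈ KFam ℱ, x = K.gK p }.Nonempty := ⟨_, K₀, hK₀, rfl⟩
  have hgbdd : BddBelow { x : ℝ | ∃ K ∈ KFam ℱ, x = K.gK p } := by
    refine ⟨0, fun x hx => ?_⟩
    obtain ⟨K, -, rfl⟩ := hx
    exact gK_nonneg K hp
  have hfbdd : BddBelow { x : ℝ | ∃ K ∈ KFam ℱ, x = K.fK p } := by
    refine ⟨0, fun x hx => ?_⟩
    obtain ⟨K, -, rfl⟩ := hx
    exact le_trans (gK_nonneg K hp) (gK_le_fK K hp)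
  apply le_antisymm
  · -- inf f ≤ inf g
    refine le_csInf hgne ?_
    rintro x ⟨K, hK, rfl⟩
    refine le_of_forall_pos_le_add ?_
    intro ε hε
    obtain ⟨y, hy, hylt⟩ := Real.lt_sInf_add_pos (qset_nonempty K p) (half_pos hε)
    obtain ⟨u, hu, hsu, rfl⟩ := hy
    obtain ⟨m, hN, happ⟩ := qf_approx K hp hu hsu (half_pos hε)
    have hmem : blowup K m hN ∈ KFam ℱ := by
      intro F hF hc
      exact hK F hF (CHom_blowup F.2 K m hN hc)
    calc sInf { x : ℝ | ∃ K ∈ KFam ℱ, x = K.fK p }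
        ≤ (blowup K m hN).fK p := csInf_le hfbdd ⟨_, hmem, rfl⟩
      _ = qf K p (fun i => (m i : ℝ) / ((∑ i, m i : ℕ) : ℝ)) := fK_blowup K m hN p
      _ ≤ qf K p u + ε/2 := happ
      _ ≤ (K.gK p + ε/2) + ε/2 := by
          have : qf K p u < K.gK p + ε/2 := hylt
          linarith
      _ = K.gK p + ε := by ring
  · -- inf g ≤ inf f
    refine le_csInf hfne ?_
    rintro x ⟨K, hK, rfl⟩
    calc sInf { x : ℝ | ∃ K ∈ KFam ℱ, x = K.gK p }
        ≤ K.gK p := csInf_le hgbdd ⟨K, hK, rfl⟩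
      _ ≤ K.fK p := gK_le_fK K hp
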